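/- arXiv:2510.23373 — 3 statements merged into one kernel-verified Lean document; each statement's English description precedes it below -/
import Mathlib

section
/- Let f : \mathbb{N} \to \mathbb{R} be nonnegative and let c \ge 0 be such that f(k)/\sqrt{k} \to c as k \to \infty. Then the Poissonized average satisfies (e^{-\lambda} \sum_{k=0}^{\infty} f(k) \lambda^k / k!) / \sqrt{\lambda} \to c as the real parameter \lambda \to \infty. In particular, a functional of random point sets whose expectation under n i.i.d. uniform points is c\sqrt{n} + o(\sqrt{n}) has expectation c\sqrt{\lambda} + o(\sqrt{\lambda}) under a Poisson number of points with mean \lambda. -/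
open Filter

lemma tsum_exp (x : ℝ) : ∑' n : ℕ, x ^ n / n.factorial = Real.exp x := by
  rw [Real.exp_eq_exp_ℝ, NormedSpace.exp_eq_tsum_div]

lemma summable_k (x : ℝ) : Summable (fun n : ℕ => (n : ℝ) * x ^ n / n.factorial) := by
  rw [← summable_nat_add_iff 1]
  have : (fun n : ℕ => ((n + 1 : ℕ) : ℝ) * x ^ (n + 1) / (n + 1).factorial)
      = fun n : ℕ => x * (x ^ n / n.factorial) := by
    funext n
    rw [Nat.factorial_succ]
    push_cast
    field_simp
    ring
  rw [this]
  exact (Real.summable_pow_div_factorial x).mul_left x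

lemma tsum_k (x : ℝ) : ∑' n : ℕ, (n : ℝ) * x ^ n / n.factorial = x * Real.exp x := by
  rw [Summable.tsum_eq_zero_add (summable_k x)]
  simp only [Nat.cast_zero, zero_mul, zero_div, zero_add]
  have : (fun n : ℕ => ((n + 1 : ℕ) : ℝ) * x ^ (n + 1) / (n + 1).factorial)
      = fun n : ℕ => x * (x ^ n / n.factorial) := by
    funext n
    rw [Nat.factorial_succ]
    push_cast
    field_simp
    ring
  rw [this, tsum_mul_left, tsum_exp]

lemma summable_kk (x : ℝ) :
    Summable (fun n : ℕ => (n : ℝ) * ((n : ℝ) - 1) * x ^ n / n.factorial) := by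
  rw [← summable_nat_add_iff 2]
  have : (fun n : ℕ => ((n + 2 : ℕ) : ℝ) * (((n + 2 : ℕ) : ℝ) - 1) * x ^ (n + 2) / (n + 2).factorial)
      = fun n : ℕ => (x * x) * (x ^ n / n.factorial) := by
    funext n
    rw [show n + 2 = (n + 1) + 1 from rfl, Nat.factorial_succ, Nat.factorial_succ]
    push_cast
    field_simp
    ring
  rw [this]
  exact (Real.summable_pow_div_factorial x).mul_left _

lemma tsum_kk (x : ℝ) :
    ∑' n : ℕ, (n : ℝ) * ((n : ℝ) - 1) * x ^ n / n.factorial = x ^ 2 * Real.exp x := by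
  rw [Summable.tsum_eq_zero_add (summable_kk x),
    Summable.tsum_eq_zero_add ((summable_nat_add_iff 1).2 (summable_kk x))]
  have heq : (fun n : ℕ =>
      ((n + 1 + 1 : ℕ) : ℝ) * (((n + 1 + 1 : ℕ) : ℝ) - 1) * x ^ (n + 1 + 1) / (n + 1 + 1).factorial)
      = fun n : ℕ => (x ^ 2) * (x ^ n / n.factorial) := by
    funext n
    rw [Nat.factorial_succ, Nat.factorial_succ]
    push_cast
    field_simp
    ring
  rw [heq, tsum_mul_left, tsum_exp]
  norm_num

lemma summable_combo (x A B C : ℝ) :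
    Summable (fun k : ℕ => (A + B * k + C * ((k : ℝ) * ((k : ℝ) - 1))) * x ^ k / k.factorial) := by
  have : (fun k : ℕ => (A + B * k + C * ((k : ℝ) * ((k : ℝ) - 1))) * x ^ k / k.factorial)
      = fun k : ℕ => A * (x ^ k / k.factorial) + B * ((k : ℝ) * x ^ k / k.factorial)
        + C * ((k : ℝ) * ((k : ℝ) - 1) * x ^ k / k.factorial) := by
    funext k; ring
  rw [this]
  exact (((Real.summable_pow_div_factorial x).mul_left A).add
    ((summable_k x).mul_left B)).add ((summable_kk x).mul_left C)

lemma tsum_combo (x A B C : ℝ) :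
    ∑' k : ℕ, (A + B * k + C * ((k : ℝ) * ((k : ℝ) - 1))) * x ^ k / k.factorial
      = (A + B * x + C * x ^ 2) * Real.exp x := by
  have : (fun k : ℕ => (A + B * k + C * ((k : ℝ) * ((k : ℝ) - 1))) * x ^ k / k.factorial)
      = fun k : ℕ => A * (x ^ k / k.factorial) + B * ((k : ℝ) * x ^ k / k.factorial)
        + C * ((k : ℝ) * ((k : ℝ) - 1) * x ^ k / k.factorial) := by
    funext k; ring
  rw [this,
    Summable.tsum_add (((Real.summable_pow_div_factorial x).mul_left A).add ((summable_k x).mul_left B))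
      ((summable_kk x).mul_left C),
    Summable.tsum_add ((Real.summable_pow_div_factorial x).mul_left A) ((summable_k x).mul_left B),
    tsum_mul_left, tsum_mul_left, tsum_mul_left, tsum_exp, tsum_k, tsum_kk]
  ring

lemma sqrt_nat_le (k : ℕ) : Real.sqrt k ≤ (k : ℝ) := by
  have h : (k : ℝ) ≤ (k : ℝ) ^ 2 := by
    have := Nat.le_self_pow two_ne_zero k
    exact_mod_cast this
  calc Real.sqrt k ≤ Real.sqrt ((k : ℝ) ^ 2) := Real.sqrt_le_sqrt h
  _ = k := Real.sqrt_sq (Nat.cast_nonneg k)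

lemma summable_poisson_sqrt (x : ℝ) (hx : 0 ≤ x) :
    Summable (fun k : ℕ => Real.sqrt k * x ^ k / k.factorial) := by
  refine Summable.of_nonneg_of_le (fun k => by positivity) (fun k => ?_) (summable_k x)
  gcongr
  exact sqrt_nat_le k

lemma sqrt_tsum_le (x : ℝ) (hx : 0 < x) :
    ∑' k : ℕ, Real.sqrt k * x ^ k / k.factorial ≤ Real.sqrt x * Real.exp x := by
  have hsx : 0 < Real.sqrt x := Real.sqrt_pos.2 hx
  have hxx : Real.sqrt x * Real.sqrt x = x := Real.mul_self_sqrt hx.le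
  have h1 : ∑' k : ℕ, (2 * Real.sqrt x) * (Real.sqrt k * x ^ k / k.factorial)
      ≤ ∑' k : ℕ, (x + 1 * k + 0 * ((k : ℝ) * ((k : ℝ) - 1))) * x ^ k / k.factorial := by
    refine Summable.tsum_le_tsum (fun k => ?_) ((summable_poisson_sqrt x hx.le).mul_left _)
      (summable_combo x _ _ _)
    have hp : 2 * Real.sqrt x * Real.sqrt k ≤ x + k := by
      nlinarith [sq_nonneg (Real.sqrt x - Real.sqrt k),
        Real.sq_sqrt (Nat.cast_nonneg k : ((0:ℝ) ≤ k)), Real.sq_sqrt hx.le]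
    have hpos : (0:ℝ) ≤ x ^ k / k.factorial := by positivity
    calc (2 * Real.sqrt x) * (Real.sqrt k * x ^ k / k.factorial)
        = (2 * Real.sqrt x * Real.sqrt k) * (x ^ k / k.factorial) := by ring
      _ ≤ (x + k) * (x ^ k / k.factorial) := mul_le_mul_of_nonneg_right hp hpos
      _ = (x + 1 * k + 0 * ((k : ℝ) * ((k : ℝ) - 1))) * x ^ k / k.factorial := by ring
  rw [tsum_mul_left, tsum_combo] at h1
  have h2 : (x + 1 * x + 0 * x ^ 2) * Real.exp x
      = 2 * Real.sqrt x * (Real.sqrt x * Real.exp x) := by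
    linear_combination (-2 * Real.exp x) * hxx
  rw [h2] at h1
  exact le_of_mul_le_mul_left h1 (by positivity)

lemma le_sqrt_tsum (x : ℝ) (hx : 0 < x) :
    (Real.sqrt x - 1 / (2 * Real.sqrt x)) * Real.exp x
      ≤ ∑' k : ℕ, Real.sqrt k * x ^ k / k.factorial := by
  have hsx : 0 < Real.sqrt x := Real.sqrt_pos.2 hx
  have hxx : Real.sqrt x * Real.sqrt x = x := Real.mul_self_sqrt hx.le
  have h1 : ∑' k : ℕ, (0 + (3 * x - 1) * k + (-1) * ((k : ℝ) * ((k : ℝ) - 1))) * x ^ k / k.factorial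
      ≤ ∑' k : ℕ, (2 * x * Real.sqrt x) * (Real.sqrt k * x ^ k / k.factorial) := by
    refine Summable.tsum_le_tsum (fun k => ?_) (summable_combo x _ _ _)
      ((summable_poisson_sqrt x hx.le).mul_left _)
    have hp : 3 * x * (k : ℝ) - (k : ℝ) ^ 2 ≤ 2 * x * Real.sqrt x * Real.sqrt k := by
      nlinarith [mul_nonneg (Real.sqrt_nonneg (k : ℝ))
          (mul_nonneg (sq_nonneg (Real.sqrt k - Real.sqrt x))
            (by positivity : (0:ℝ) ≤ Real.sqrt k + 2 * Real.sqrt x)),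
        Real.sq_sqrt (Nat.cast_nonneg k : ((0:ℝ) ≤ k)), Real.sq_sqrt hx.le,
        Real.sqrt_nonneg (k : ℝ), Real.sqrt_nonneg x]
    have hpos : (0:ℝ) ≤ x ^ k / k.factorial := by positivity
    calc (0 + (3 * x - 1) * k + (-1) * ((k : ℝ) * ((k : ℝ) - 1))) * x ^ k / k.factorial
        = (3 * x * (k : ℝ) - (k : ℝ) ^ 2) * (x ^ k / k.factorial) := by ring
      _ ≤ (2 * x * Real.sqrt x * Real.sqrt k) * (x ^ k / k.factorial) :=
          mul_le_mul_of_nonneg_right hp hpos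
      _ = (2 * x * Real.sqrt x) * (Real.sqrt k * x ^ k / k.factorial) := by ring
  rw [tsum_mul_left, tsum_combo] at h1
  have h2 : (0 + (3 * x - 1) * x + (-1) * x ^ 2) * Real.exp x = (2 * x ^ 2 - x) * Real.exp x := by
    ring
  rw [h2] at h1
  -- h1 : (2x² - x) * exp x ≤ 2x√x * S
  have h3 : 0 < 2 * x * Real.sqrt x := by positivity
  rw [← mul_le_mul_iff_right₀ h3]
  calc 2 * x * Real.sqrt x * ((Real.sqrt x - 1 / (2 * Real.sqrt x)) * Real.exp x)
      = (2 * x ^ 2 - x) * Real.exp x := by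
        have h4 : (Real.sqrt x)⁻¹ * Real.sqrt x = 1 := inv_mul_cancel₀ hsx.ne'
        linear_combination (2 * x * Real.exp x) * hxx + (-(x * Real.exp x)) * h4
    _ ≤ _ := h1

set_option maxHeartbeats 2000000 in
/-- Poissonization: if `f k / √k → c` for a nonnegative function `f` and `c ≥ 0`, then the
Poissonized average `e^{-λ} ∑_k f k · λ^k / k!` divided by `√λ` also tends to `c`
as the real parameter `λ → ∞`. -/
theorem stmt1 (f : ℕ → ℝ) (hf : ∀ k, 0 ≤ f k) (c : ℝ) (hc : 0 ≤ c)
    (h : Tendsto (fun k : ℕ => f k / Real.sqrt k) atTop (nhds c)) :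
    Tendsto (fun lam : ℝ =>
        (Real.exp (-lam) * ∑' k : ℕ, f k * lam ^ k / (Nat.factorial k)) / Real.sqrt lam)
      atTop (nhds c) := by
  rw [Metric.tendsto_nhds]
  intro ε hε
  obtain ⟨K0, hK0⟩ := Metric.tendsto_atTop.mp h (ε / 4) (by positivity)
  set K : ℕ := max K0 1 with hK
  set B : ℝ := ∑ k ∈ Finset.range K, f k with hBdef
  set D : ℝ := |c - ε / 4| * Real.sqrt K with hDdef
  have hB : 0 ≤ B := Finset.sum_nonneg fun k _ => hf k
  have hD : 0 ≤ D := mul_nonneg (abs_nonneg _) (Real.sqrt_nonneg _)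
  have hcε : 0 ≤ c + ε / 4 := by linarith
  -- pointwise bounds
  have hub : ∀ k : ℕ, f k ≤ (c + ε / 4) * Real.sqrt k + B := by
    intro k
    by_cases hk : K ≤ k
    · have h1 : 1 ≤ k := le_trans (le_max_right K0 1) hk
      have hsk : 0 < Real.sqrt k := Real.sqrt_pos.2 (by exact_mod_cast h1)
      have hd := hK0 k (le_trans (le_max_left K0 1) hk)
      rw [Real.dist_eq, abs_sub_lt_iff] at hd
      have h2 : f k / Real.sqrt k < c + ε / 4 := by linarith [hd.1]
      rw [div_lt_iff₀ hsk] at h2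
      linarith
    · push_neg at hk
      have h2 : f k ≤ B := Finset.single_le_sum (fun i _ => hf i) (Finset.mem_range.2 hk)
      have h3 : 0 ≤ (c + ε / 4) * Real.sqrt k := mul_nonneg hcε (Real.sqrt_nonneg _)
      linarith
  have hlb : ∀ k : ℕ, (c - ε / 4) * Real.sqrt k - D ≤ f k := by
    intro k
    by_cases hk : K ≤ k
    · rcases le_or_gt 0 (c - ε / 4) with hc' | hc'
      · have h1 : 1 ≤ k := le_trans (le_max_right K0 1) hk
        have hsk : 0 < Real.sqrt k := Real.sqrt_pos.2 (by exact_mod_cast h1)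
        have hd := hK0 k (le_trans (le_max_left K0 1) hk)
        rw [Real.dist_eq, abs_sub_lt_iff] at hd
        have h2 : c - ε / 4 < f k / Real.sqrt k := by linarith [hd.2]
        rw [lt_div_iff₀ hsk] at h2
        linarith
      · have h2 : (c - ε / 4) * Real.sqrt k ≤ 0 :=
          mul_nonpos_of_nonpos_of_nonneg hc'.le (Real.sqrt_nonneg _)
        linarith [hf k]
    · push_neg at hk
      have hkK : Real.sqrt k ≤ Real.sqrt K := Real.sqrt_le_sqrt (by exact_mod_cast hk.le)
      have h2 : (c - ε / 4) * Real.sqrt k ≤ D := by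
        calc (c - ε / 4) * Real.sqrt k ≤ |c - ε / 4| * Real.sqrt k :=
              mul_le_mul_of_nonneg_right (le_abs_self _) (Real.sqrt_nonneg _)
          _ ≤ |c - ε / 4| * Real.sqrt K := mul_le_mul_of_nonneg_left hkK (abs_nonneg _)
          _ = D := rfl
      linarith [hf k]
  -- eventual smallness
  have hsqrtTop : Tendsto Real.sqrt atTop atTop := by
    refine tendsto_atTop_atTop.2 fun b => ⟨(max b 0) ^ 2, fun a ha => ?_⟩
    calc b ≤ max b 0 := le_max_left b 0
      _ = Real.sqrt ((max b 0) ^ 2) := (Real.sqrt_sq (le_max_right b 0)).symm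
      _ ≤ Real.sqrt a := Real.sqrt_le_sqrt ha
  have hC : Tendsto (fun x : ℝ => (B + D + |c - ε / 4| / 2) / Real.sqrt x) atTop (nhds 0) :=
    Tendsto.div_atTop tendsto_const_nhds hsqrtTop
  filter_upwards [hC.eventually_lt_const (half_pos hε), eventually_ge_atTop (1 : ℝ)]
    with x hx1 hx2
  have hx0 : 0 < x := lt_of_lt_of_le one_pos hx2
  have hsx : 0 < Real.sqrt x := Real.sqrt_pos.2 hx0
  have hsx1 : 1 ≤ Real.sqrt x := by
    rw [show (1:ℝ) = Real.sqrt 1 by simp]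
    exact Real.sqrt_le_sqrt hx2
  set s : ℝ := Real.sqrt x with hsdef
  set S : ℝ := ∑' k : ℕ, Real.sqrt k * x ^ k / k.factorial with hSdef
  set T : ℝ := ∑' k : ℕ, f k * x ^ k / k.factorial with hTdef
  have hE : 0 < Real.exp x := Real.exp_pos x
  have hprod : Real.exp (-x) * Real.exp x = 1 := by
    rw [← Real.exp_add]; simp
  -- summability of f series
  have hsf : Summable (fun k : ℕ => f k * x ^ k / k.factorial) := by
    refine Summable.of_nonneg_of_le
      (fun k => div_nonneg (mul_nonneg (hf k) (pow_nonneg hx0.le k)) (Nat.cast_nonneg _))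
      (fun k => ?_)
      (((summable_poisson_sqrt x hx0.le).mul_left (c + ε / 4)).add
        ((Real.summable_pow_div_factorial x).mul_left B))
    have hpos : (0:ℝ) ≤ x ^ k / k.factorial := by positivity
    calc f k * x ^ k / k.factorial = f k * (x ^ k / k.factorial) := by ring
      _ ≤ ((c + ε / 4) * Real.sqrt k + B) * (x ^ k / k.factorial) :=
          mul_le_mul_of_nonneg_right (hub k) hpos
      _ = (c + ε / 4) * (Real.sqrt k * x ^ k / k.factorial) + B * (x ^ k / k.factorial) := by
          ring
  -- upper bound on T
  have hTub : T ≤ (c + ε / 4) * S + B * Real.exp x := by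
    have h1 : T ≤ ∑' k : ℕ, ((c + ε / 4) * (Real.sqrt k * x ^ k / k.factorial)
        + B * (x ^ k / k.factorial)) := by
      refine Summable.tsum_le_tsum (fun k => ?_) hsf
        (((summable_poisson_sqrt x hx0.le).mul_left (c + ε / 4)).add
          ((Real.summable_pow_div_factorial x).mul_left B))
      have hpos : (0:ℝ) ≤ x ^ k / k.factorial := by positivity
      calc f k * x ^ k / k.factorial = f k * (x ^ k / k.factorial) := by ring
        _ ≤ ((c + ε / 4) * Real.sqrt k + B) * (x ^ k / k.factorial) :=
            mul_le_mul_of_nonneg_right (hub k) hpos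
        _ = (c + ε / 4) * (Real.sqrt k * x ^ k / k.factorial) + B * (x ^ k / k.factorial) := by
            ring
    rwa [Summable.tsum_add ((summable_poisson_sqrt x hx0.le).mul_left (c + ε / 4))
      ((Real.summable_pow_div_factorial x).mul_left B), tsum_mul_left, tsum_mul_left,
      tsum_exp] at h1
  -- lower bound on T
  have hTlb : (c - ε / 4) * S - D * Real.exp x ≤ T := by
    have h1 : ∑' k : ℕ, ((c - ε / 4) * (Real.sqrt k * x ^ k / k.factorial)
        - D * (x ^ k / k.factorial)) ≤ T := by
      refine Summable.tsum_le_tsum (fun k => ?_)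
        (((summable_poisson_sqrt x hx0.le).mul_left (c - ε / 4)).sub
          ((Real.summable_pow_div_factorial x).mul_left D)) hsf
      have hpos : (0:ℝ) ≤ x ^ k / k.factorial := by positivity
      calc (c - ε / 4) * (Real.sqrt k * x ^ k / k.factorial) - D * (x ^ k / k.factorial)
          = ((c - ε / 4) * Real.sqrt k - D) * (x ^ k / k.factorial) := by ring
        _ ≤ f k * (x ^ k / k.factorial) := mul_le_mul_of_nonneg_right (hlb k) hpos
        _ = f k * x ^ k / k.factorial := by ring
    rwa [Summable.tsum_sub ((summable_poisson_sqrt x hx0.le).mul_left (c - ε / 4))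
      ((Real.summable_pow_div_factorial x).mul_left D), tsum_mul_left, tsum_mul_left,
      tsum_exp] at h1
  -- bounds on S
  have hSub : S ≤ s * Real.exp x := sqrt_tsum_le x hx0
  have hSlb : (s - 1 / (2 * s)) * Real.exp x ≤ S := le_sqrt_tsum x hx0
  -- combine: E' * T bounds
  have hET_ub : Real.exp (-x) * T ≤ (c + ε / 4) * s + B := by
    have h1 : T ≤ ((c + ε / 4) * s + B) * Real.exp x := by
      have := mul_le_mul_of_nonneg_left hSub hcε
      nlinarith
    have h2 := mul_le_mul_of_nonneg_left h1 (Real.exp_pos (-x)).le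
    calc Real.exp (-x) * T ≤ Real.exp (-x) * (((c + ε / 4) * s + B) * Real.exp x) := h2
      _ = ((c + ε / 4) * s + B) * (Real.exp (-x) * Real.exp x) := by ring
      _ = (c + ε / 4) * s + B := by rw [hprod, mul_one]
  have hET_lb : (c - ε / 4) * s - |c - ε / 4| / 2 - D ≤ Real.exp (-x) * T := by
    have habs : |c - ε / 4| / (2 * s) ≤ |c - ε / 4| / 2 :=
      div_le_div_of_nonneg_left (abs_nonneg _) two_pos (by linarith)
    have h1 : ((c - ε / 4) * s - |c - ε / 4| / 2 - D) * Real.exp x ≤ T := by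
      rcases le_or_gt 0 (c - ε / 4) with hc' | hc'
      · have habs2 : |c - ε / 4| = c - ε / 4 := abs_of_nonneg hc'
        have h2 : (c - ε / 4) * ((s - 1 / (2 * s)) * Real.exp x) ≤ (c - ε / 4) * S :=
          mul_le_mul_of_nonneg_left hSlb hc'
        have h3 : (c - ε / 4) * (1 / (2 * s)) ≤ |c - ε / 4| / 2 := by
          calc (c - ε / 4) * (1 / (2 * s)) = |c - ε / 4| / (2 * s) := by rw [habs2]; ring
            _ ≤ |c - ε / 4| / 2 := habs
        nlinarith
      · have habs2 : |c - ε / 4| = -(c - ε / 4) := abs_of_neg hc'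
        have h2 : (c - ε / 4) * (s * Real.exp x) ≤ (c - ε / 4) * S := by
          apply mul_le_mul_of_nonpos_left hSub hc'.le
        nlinarith
    have h2 := mul_le_mul_of_nonneg_left h1 (Real.exp_pos (-x)).le
    calc (c - ε / 4) * s - |c - ε / 4| / 2 - D
        = ((c - ε / 4) * s - |c - ε / 4| / 2 - D) * (Real.exp (-x) * Real.exp x) := by
          rw [hprod, mul_one]
      _ = Real.exp (-x) * (((c - ε / 4) * s - |c - ε / 4| / 2 - D) * Real.exp x) := by ring
      _ ≤ Real.exp (-x) * T := h2
  -- finish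
  have hBD : B + D + |c - ε / 4| / 2 < (ε / 2) * s := by
    rw [div_lt_iff₀ hsx] at hx1
    linarith
  rw [Real.dist_eq, abs_sub_lt_iff]
  constructor
  · rw [sub_lt_iff_lt_add, div_lt_iff₀ hsx]
    nlinarith [abs_nonneg (c - ε / 4)]
  · rw [sub_lt_iff_lt_add, ← sub_lt_iff_lt_add', lt_div_iff₀ hsx]
    nlinarith [abs_nonneg (c - ε / 4)]
end

section
/- Let a and b be points of the unit square [0,1]^2 in the Euclidean plane, and let D be the closed disk with center (a+b)/2 and radius dist(a,b)/2, i.e. the disk having the segment from a to b as a diameter (so a and b are antipodal points on its boundary circle). Then the Lebesgue area of D \cap [0,1]^2 is at least half the area of D; that is, vol(D \cap [0,1]^2) \ge (\pi/2) \cdot (dist(a,b)/2)^2. -/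
open MeasureTheory

set_option maxHeartbeats 1000000 in
/-- Key measure inequality in `ℝ × ℝ`: under the antipodality constraints, the disk of radius
`r` centered at `(m0, m1)` has at most twice the measure of its intersection with the unit
square. -/
lemma half_disk_aux (m0 m1 c0 c1 r : ℝ)
    (hr2 : r ^ 2 = c0 ^ 2 + c1 ^ 2) (hrhalf : r ^ 2 ≤ 1 / 2)
    (h1 : c0 ^ 2 ≤ m0 ^ 2) (h2 : c0 ^ 2 ≤ (1 - m0) ^ 2)
    (h3 : c1 ^ 2 ≤ m1 ^ 2) (h4 : c1 ^ 2 ≤ (1 - m1) ^ 2)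
    (hm0 : 0 ≤ m0) (hm0' : m0 ≤ 1) (hm1 : 0 ≤ m1) (hm1' : m1 ≤ 1) :
    volume {p : ℝ × ℝ | (p.1 - m0) ^ 2 + (p.2 - m1) ^ 2 ≤ r ^ 2} ≤
      2 * volume {p : ℝ × ℝ | ((p.1 - m0) ^ 2 + (p.2 - m1) ^ 2 ≤ r ^ 2) ∧
        (0 ≤ p.1 ∧ p.1 ≤ 1) ∧ (0 ≤ p.2 ∧ p.2 ≤ 1)} := by
  set D : Set (ℝ × ℝ) := {p | (p.1 - m0) ^ 2 + (p.2 - m1) ^ 2 ≤ r ^ 2} with hD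
  set T₀ : Set (ℝ × ℝ) := {p | ((p.1 - m0) ^ 2 + (p.2 - m1) ^ 2 ≤ r ^ 2) ∧
        (0 ≤ p.1 ∧ p.1 ≤ 1) ∧ (0 ≤ p.2 ∧ p.2 ≤ 1)} with hT₀
  set L : Set (ℝ × ℝ) := {p | ((p.1 - m0) ^ 2 + (p.2 - m1) ^ 2 ≤ r ^ 2) ∧
        (p.1 < 0) ∧ (0 ≤ p.2 ∧ p.2 ≤ 1)} with hL
  set R : Set (ℝ × ℝ) := {p | ((p.1 - m0) ^ 2 + (p.2 - m1) ^ 2 ≤ r ^ 2) ∧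
        (1 < p.1) ∧ (0 ≤ p.2 ∧ p.2 ≤ 1)} with hR
  set B : Set (ℝ × ℝ) := {p | ((p.1 - m0) ^ 2 + (p.2 - m1) ^ 2 ≤ r ^ 2) ∧
        (p.2 < 0) ∧ (0 ≤ p.1 ∧ p.1 ≤ 1)} with hB
  set T : Set (ℝ × ℝ) := {p | ((p.1 - m0) ^ 2 + (p.2 - m1) ^ 2 ≤ r ^ 2) ∧
        (1 < p.2) ∧ (0 ≤ p.1 ∧ p.1 ≤ 1)} with hT
  -- the reflections
  set φL : ℝ × ℝ → ℝ × ℝ := Prod.map (fun x : ℝ => -x) id with hφL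
  set φR : ℝ × ℝ → ℝ × ℝ := Prod.map (fun x : ℝ => 2 - x) id with hφR
  set φB : ℝ × ℝ → ℝ × ℝ := Prod.map (id : ℝ → ℝ) (fun x : ℝ => -x) with hφB
  set φT : ℝ × ℝ → ℝ × ℝ := Prod.map (id : ℝ → ℝ) (fun x : ℝ => 2 - x) with hφT
  have mpL : MeasurePreserving φL volume volume := by
    rw [hφL, Measure.volume_eq_prod]
    exact (Measure.measurePreserving_neg _).prod (MeasurePreserving.id _)
  have mpR : MeasurePreserving φR volume volume := by
    rw [hφR, Measure.volume_eq_prod]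
    exact (Measure.measurePreserving_sub_left _ 2).prod (MeasurePreserving.id _)
  have mpB : MeasurePreserving φB volume volume := by
    rw [hφB, Measure.volume_eq_prod]
    exact (MeasurePreserving.id _).prod (Measure.measurePreserving_neg _)
  have mpT : MeasurePreserving φT volume volume := by
    rw [hφT, Measure.volume_eq_prod]
    exact (MeasurePreserving.id _).prod (Measure.measurePreserving_sub_left _ 2)
  -- measurability
  have mcont : Measurable (fun p : ℝ × ℝ => (p.1 - m0) ^ 2 + (p.2 - m1) ^ 2) := by
    fun_prop
  have m01 : MeasurableSet {p : ℝ × ℝ | 0 ≤ p.1} :=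
    measurableSet_le measurable_const measurable_fst
  have m02 : MeasurableSet {p : ℝ × ℝ | p.1 ≤ 1} :=
    measurableSet_le measurable_fst measurable_const
  have m03 : MeasurableSet {p : ℝ × ℝ | 0 ≤ p.2} :=
    measurableSet_le measurable_const measurable_snd
  have m04 : MeasurableSet {p : ℝ × ℝ | p.2 ≤ 1} :=
    measurableSet_le measurable_snd measurable_const
  have m05 : MeasurableSet {p : ℝ × ℝ | p.1 < 0} :=
    measurableSet_lt measurable_fst measurable_const
  have m06 : MeasurableSet {p : ℝ × ℝ | 1 < p.1} :=
    measurableSet_lt measurable_const measurable_fst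
  have m07 : MeasurableSet {p : ℝ × ℝ | p.2 < 0} :=
    measurableSet_lt measurable_snd measurable_const
  have m08 : MeasurableSet {p : ℝ × ℝ | 1 < p.2} :=
    measurableSet_lt measurable_const measurable_snd
  have mDs : MeasurableSet {p : ℝ × ℝ | (p.1 - m0) ^ 2 + (p.2 - m1) ^ 2 ≤ r ^ 2} :=
    measurableSet_le mcont measurable_const
  have mD : MeasurableSet D := mDs
  have mT₀ : MeasurableSet T₀ := by
    rw [hT₀]; simp only [Set.setOf_and]
    exact mDs.inter ((m01.inter m02).inter (m03.inter m04))
  have mL : MeasurableSet L := by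
    rw [hL]; simp only [Set.setOf_and]
    exact mDs.inter (m05.inter (m03.inter m04))
  have mR : MeasurableSet R := by
    rw [hR]; simp only [Set.setOf_and]
    exact mDs.inter (m06.inter (m03.inter m04))
  have mB : MeasurableSet B := by
    rw [hB]; simp only [Set.setOf_and]
    exact mDs.inter (m07.inter (m01.inter m02))
  have mT : MeasurableSet T := by
    rw [hT]; simp only [Set.setOf_and]
    exact mDs.inter (m08.inter (m01.inter m02))
  -- the disk is covered by the five pieces
  have hcover : D ⊆ T₀ ∪ L ∪ R ∪ B ∪ T := by
    rintro ⟨x, y⟩ hx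
    simp only [hD, Set.mem_setOf_eq] at hx
    simp only [hT₀, hL, hR, hB, hT, Set.mem_union, Set.mem_setOf_eq]
    rcases lt_or_ge x 0 with hx0 | hx0
    · -- x < 0 : then y must be in [0,1] (corners are empty)
      have hy0 : 0 ≤ y := by
        by_contra hy; push_neg at hy
        nlinarith [mul_nonpos_of_nonpos_of_nonneg hx0.le hm0,
          mul_nonpos_of_nonpos_of_nonneg hy.le hm1,
          mul_pos (neg_pos.mpr hx0) (neg_pos.mpr hx0)]
      have hy1 : y ≤ 1 := by
        by_contra hy; push_neg at hy
        nlinarith [mul_nonpos_of_nonpos_of_nonneg hx0.le hm0,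
          mul_nonneg (by linarith : (0:ℝ) ≤ y - 1) (by linarith : (0:ℝ) ≤ 1 - m1),
          mul_pos (neg_pos.mpr hx0) (neg_pos.mpr hx0)]
      exact Or.inl (Or.inl (Or.inl (Or.inr ⟨hx, hx0, hy0, hy1⟩)))
    rcases lt_or_ge (1 : ℝ) x with hx1 | hx1
    · have hy0 : 0 ≤ y := by
        by_contra hy; push_neg at hy
        nlinarith [mul_nonneg (by linarith : (0:ℝ) ≤ x - 1) (by linarith : (0:ℝ) ≤ 1 - m0),
          mul_nonpos_of_nonpos_of_nonneg hy.le hm1,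
          mul_pos (by linarith : (0:ℝ) < x - 1) (by linarith : (0:ℝ) < x - 1)]
      have hy1 : y ≤ 1 := by
        by_contra hy; push_neg at hy
        nlinarith [mul_nonneg (by linarith : (0:ℝ) ≤ x - 1) (by linarith : (0:ℝ) ≤ 1 - m0),
          mul_nonneg (by linarith : (0:ℝ) ≤ y - 1) (by linarith : (0:ℝ) ≤ 1 - m1),
          mul_pos (by linarith : (0:ℝ) < x - 1) (by linarith : (0:ℝ) < x - 1)]
      exact Or.inl (Or.inl (Or.inr ⟨hx, hx1, hy0, hy1⟩))
    rcases lt_or_ge y 0 with hy0 | hy0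
    · exact Or.inl (Or.inr ⟨hx, hy0, hx0, hx1⟩)
    rcases lt_or_ge (1 : ℝ) y with hy1 | hy1
    · exact Or.inr ⟨hx, hy1, hx0, hx1⟩
    · exact Or.inl (Or.inl (Or.inl (Or.inl ⟨hx, ⟨hx0, hx1⟩, hy0, hy1⟩)))
  -- the reflected caps
  set L' : Set (ℝ × ℝ) := φL ⁻¹' L with hL'
  set R' : Set (ℝ × ℝ) := φR ⁻¹' R with hR'
  set B' : Set (ℝ × ℝ) := φB ⁻¹' B with hB'
  set T' : Set (ℝ × ℝ) := φT ⁻¹' T with hT'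
  have memL' : ∀ p : ℝ × ℝ, p ∈ L' ↔
      ((-p.1 - m0) ^ 2 + (p.2 - m1) ^ 2 ≤ r ^ 2) ∧ (0 < p.1) ∧ (0 ≤ p.2 ∧ p.2 ≤ 1) := by
    intro p
    simp only [hL', hφL, hL, Set.mem_preimage, Set.mem_setOf_eq, Prod.map_fst, Prod.map_snd,
      id_eq, neg_lt_zero]
  have memR' : ∀ p : ℝ × ℝ, p ∈ R' ↔
      ((2 - p.1 - m0) ^ 2 + (p.2 - m1) ^ 2 ≤ r ^ 2) ∧ (p.1 < 1) ∧ (0 ≤ p.2 ∧ p.2 ≤ 1) := by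
    intro p
    simp only [hR', hφR, hR, Set.mem_preimage, Set.mem_setOf_eq, Prod.map_fst, Prod.map_snd,
      id_eq]
    constructor
    · rintro ⟨hq, hx, hy⟩; exact ⟨hq, by linarith, hy⟩
    · rintro ⟨hq, hx, hy⟩; exact ⟨hq, by linarith, hy⟩
  have memB' : ∀ p : ℝ × ℝ, p ∈ B' ↔
      ((p.1 - m0) ^ 2 + (-p.2 - m1) ^ 2 ≤ r ^ 2) ∧ (0 < p.2) ∧ (0 ≤ p.1 ∧ p.1 ≤ 1) := by
    intro p
    simp only [hB', hφB, hB, Set.mem_preimage, Set.mem_setOf_eq, Prod.map_fst, Prod.map_snd,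
      id_eq, neg_lt_zero]
  have memT' : ∀ p : ℝ × ℝ, p ∈ T' ↔
      ((p.1 - m0) ^ 2 + (2 - p.2 - m1) ^ 2 ≤ r ^ 2) ∧ (p.2 < 1) ∧ (0 ≤ p.1 ∧ p.1 ≤ 1) := by
    intro p
    simp only [hT', hφT, hT, Set.mem_preimage, Set.mem_setOf_eq, Prod.map_fst, Prod.map_snd,
      id_eq]
    constructor
    · rintro ⟨hq, hx, hy⟩; exact ⟨hq, by linarith, hy⟩
    · rintro ⟨hq, hx, hy⟩; exact ⟨hq, by linarith, hy⟩
  -- reflected caps live inside the disk ∩ square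
  have hL'sub : L' ⊆ T₀ := by
    rintro ⟨x, y⟩ hp
    rw [memL'] at hp
    obtain ⟨hq, hx, hy⟩ := hp
    simp only [hT₀, Set.mem_setOf_eq]
    refine ⟨by nlinarith [mul_nonneg hx.le hm0], ⟨le_of_lt hx, ?_⟩, hy⟩
    nlinarith [mul_nonneg hx.le hm0, sq_nonneg (y - m1), sq_nonneg (x - 1), sq_nonneg m0]
  have hR'sub : R' ⊆ T₀ := by
    rintro ⟨x, y⟩ hp
    rw [memR'] at hp
    obtain ⟨hq, hx, hy⟩ := hp
    simp only [hT₀, Set.mem_setOf_eq]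
    refine ⟨by nlinarith [mul_nonneg (by linarith : (0:ℝ) ≤ 1 - x) (by linarith : (0:ℝ) ≤ 1 - m0)],
      ⟨?_, le_of_lt hx⟩, hy⟩
    nlinarith [mul_nonneg (by linarith : (0:ℝ) ≤ 1 - m0)
        (by linarith : (0:ℝ) ≤ 3 - 2 * x - m0),
      sq_nonneg x, sq_nonneg (y - m1)]
  have hB'sub : B' ⊆ T₀ := by
    rintro ⟨x, y⟩ hp
    rw [memB'] at hp
    obtain ⟨hq, hy, hx⟩ := hp
    simp only [hT₀, Set.mem_setOf_eq]
    refine ⟨by nlinarith [mul_nonneg hy.le hm1], hx, ⟨le_of_lt hy, ?_⟩⟩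
    nlinarith [mul_nonneg hy.le hm1, sq_nonneg (x - m0), sq_nonneg (y - 1), sq_nonneg m1]
  have hT'sub : T' ⊆ T₀ := by
    rintro ⟨x, y⟩ hp
    rw [memT'] at hp
    obtain ⟨hq, hy, hx⟩ := hp
    simp only [hT₀, Set.mem_setOf_eq]
    refine ⟨by nlinarith [mul_nonneg (by linarith : (0:ℝ) ≤ 1 - y) (by linarith : (0:ℝ) ≤ 1 - m1)],
      hx, ⟨?_, le_of_lt hy⟩⟩
    nlinarith [mul_nonneg (by linarith : (0:ℝ) ≤ 1 - m1)
        (by linarith : (0:ℝ) ≤ 3 - 2 * y - m1),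
      sq_nonneg y, sq_nonneg (x - m0)]
  -- pairwise disjointness of the reflected caps
  have dLR : Disjoint L' R' := by
    rw [Set.disjoint_left]
    rintro ⟨x, y⟩ hp hq
    rw [memL'] at hp; rw [memR'] at hq
    obtain ⟨hq1, hx1, -⟩ := hp; obtain ⟨hq2, hx2, -⟩ := hq
    nlinarith [sq_nonneg (x + m0 - 1), sq_nonneg (y - m1)]
  have dLB : Disjoint L' B' := by
    rw [Set.disjoint_left]
    rintro ⟨x, y⟩ hp hq
    rw [memL'] at hp; rw [memB'] at hq
    obtain ⟨hq1, hx1, -⟩ := hp; obtain ⟨hq2, hy2, -⟩ := hq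
    nlinarith [mul_pos hx1 hx1, sq_nonneg y]
  have dLT : Disjoint L' T' := by
    rw [Set.disjoint_left]
    rintro ⟨x, y⟩ hp hq
    rw [memL'] at hp; rw [memT'] at hq
    obtain ⟨hq1, hx1, -⟩ := hp; obtain ⟨hq2, hy2, -⟩ := hq
    nlinarith [mul_pos hx1 hx1, sq_nonneg (1 - y)]
  have dRB : Disjoint R' B' := by
    rw [Set.disjoint_left]
    rintro ⟨x, y⟩ hp hq
    rw [memR'] at hp; rw [memB'] at hq
    obtain ⟨hq1, hx1, -⟩ := hp; obtain ⟨hq2, hy2, -⟩ := hq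
    nlinarith [mul_pos (by linarith : (0:ℝ) < 1 - x) (by linarith : (0:ℝ) < 1 - x), sq_nonneg y]
  have dRT : Disjoint R' T' := by
    rw [Set.disjoint_left]
    rintro ⟨x, y⟩ hp hq
    rw [memR'] at hp; rw [memT'] at hq
    obtain ⟨hq1, hx1, -⟩ := hp; obtain ⟨hq2, hy2, -⟩ := hq
    nlinarith [mul_pos (by linarith : (0:ℝ) < 1 - x) (by linarith : (0:ℝ) < 1 - x),
      sq_nonneg (1 - y)]
  have dBT : Disjoint B' T' := by
    rw [Set.disjoint_left]
    rintro ⟨x, y⟩ hp hq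
    rw [memB'] at hp; rw [memT'] at hq
    obtain ⟨hq1, hy1, -⟩ := hp; obtain ⟨hq2, hy2, -⟩ := hq
    nlinarith [sq_nonneg (y + m1 - 1), sq_nonneg (x - m0)]
  -- measurability of the reflected caps
  have mL' : MeasurableSet L' := mpL.measurable mL
  have mR' : MeasurableSet R' := mpR.measurable mR
  have mB' : MeasurableSet B' := mpB.measurable mB
  have mT' : MeasurableSet T' := mpT.measurable mT
  -- volumes of caps equal volumes of reflected caps
  have vL : volume L = volume L' := (mpL.measure_preimage mL.nullMeasurableSet).symm
  have vR : volume R = volume R' := (mpR.measure_preimage mR.nullMeasurableSet).symm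
  have vB : volume B = volume B' := (mpB.measure_preimage mB.nullMeasurableSet).symm
  have vT : volume T = volume T' := (mpT.measure_preimage mT.nullMeasurableSet).symm
  -- sum of reflected cap volumes = volume of their union ≤ volume T₀
  have hsum : volume L' + volume R' + volume B' + volume T' ≤ volume T₀ := by
    have e1 : volume (B' ∪ T') = volume B' + volume T' := measure_union dBT mT'
    have e2 : volume (R' ∪ (B' ∪ T')) = volume R' + (volume B' + volume T') := by
      rw [measure_union (by
        rw [Set.disjoint_union_right]; exact ⟨dRB, dRT⟩) (mB'.union mT'), e1]
    have e3 : volume (L' ∪ (R' ∪ (B' ∪ T'))) =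
        volume L' + (volume R' + (volume B' + volume T')) := by
      rw [measure_union (by
        rw [Set.disjoint_union_right, Set.disjoint_union_right]
        exact ⟨dLR, dLB, dLT⟩) ((mR'.union (mB'.union mT'))), e2]
    calc volume L' + volume R' + volume B' + volume T'
        = volume (L' ∪ (R' ∪ (B' ∪ T'))) := by rw [e3]; ring
      _ ≤ volume T₀ := by
          refine measure_mono ?_
          simp only [Set.union_subset_iff]
          exact ⟨hL'sub, hR'sub, hB'sub, hT'sub⟩
  -- put everything together
  calc volume D ≤ volume (T₀ ∪ L ∪ R ∪ B ∪ T) := measure_mono hcover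
    _ ≤ volume (T₀ ∪ L ∪ R ∪ B) + volume T := measure_union_le _ _
    _ ≤ volume (T₀ ∪ L ∪ R) + volume B + volume T := by
        gcongr; exact measure_union_le _ _
    _ ≤ volume (T₀ ∪ L) + volume R + volume B + volume T := by
        gcongr; exact measure_union_le _ _
    _ ≤ volume T₀ + volume L + volume R + volume B + volume T := by
        gcongr; exact measure_union_le _ _
    _ = volume T₀ + (volume L' + volume R' + volume B' + volume T') := by
        rw [vL, vR, vB, vT]; ring
    _ ≤ volume T₀ + volume T₀ := by gcongr
    _ = 2 * volume T₀ := (two_mul _).symm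

set_option maxHeartbeats 1000000 in
/-- If `a` and `b` lie in the unit square, then at least half of the closed disk having the
segment from `a` to `b` as a diameter lies inside the unit square:
`vol(D ∩ [0,1]²) ≥ (π/2)·(dist a b / 2)²`. -/
theorem stmt2 (a b : EuclideanSpace ℝ (Fin 2))
    (ha : ∀ i, a i ∈ Set.Icc (0 : ℝ) 1) (hb : ∀ i, b i ∈ Set.Icc (0 : ℝ) 1) :
    ENNReal.ofReal (Real.pi / 2 * (dist a b / 2) ^ 2) ≤
      volume (Metric.closedBall (midpoint ℝ a b) (dist a b / 2) ∩
        {x : EuclideanSpace ℝ (Fin 2) | ∀ i, x i ∈ Set.Icc (0 : ℝ) 1}) := by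
  obtain ⟨ha0, ha1⟩ := ha 0
  obtain ⟨ha0', ha1'⟩ := ha 1
  obtain ⟨hb0, hb1⟩ := hb 0
  obtain ⟨hb0', hb1'⟩ := hb 1
  set r : ℝ := dist a b / 2 with hrdef
  have hr : 0 ≤ r := by positivity
  set m0 : ℝ := (a 0 + b 0) / 2 with hm0def
  set m1 : ℝ := (a 1 + b 1) / 2 with hm1def
  set c0 : ℝ := (a 0 - b 0) / 2 with hc0def
  set c1 : ℝ := (a 1 - b 1) / 2 with hc1def
  have hmid : ∀ i, midpoint ℝ a b i = (a i + b i) / 2 := by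
    intro i
    have h : midpoint ℝ a b = (2⁻¹ : ℝ) • (a + b) := by
      rw [midpoint_eq_smul_add]; norm_num
    rw [h, PiLp.smul_apply, PiLp.add_apply, smul_eq_mul]
    ring
  have hdist : dist a b ^ 2 = (a 0 - b 0) ^ 2 + (a 1 - b 1) ^ 2 := by
    rw [EuclideanSpace.dist_eq, Real.sq_sqrt (by positivity)]
    simp [Fin.sum_univ_two, Real.dist_eq, sq_abs]
  have hr2 : r ^ 2 = c0 ^ 2 + c1 ^ 2 := by
    rw [hrdef, hc0def, hc1def, div_pow, hdist]; ring
  have hrhalf : r ^ 2 ≤ 1 / 2 := by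
    rw [hr2, hc0def, hc1def]
    nlinarith [mul_nonneg ha0 hb0, mul_nonneg ha0' hb0',
      mul_nonneg (by linarith : (0:ℝ) ≤ 1 - a 0) (by linarith : (0:ℝ) ≤ 1 - b 0),
      mul_nonneg (by linarith : (0:ℝ) ≤ 1 - a 1) (by linarith : (0:ℝ) ≤ 1 - b 1)]
  -- the measure-preserving identification with ℝ × ℝ
  set f : EuclideanSpace ℝ (Fin 2) → ℝ × ℝ :=
    ((MeasurableEquiv.finTwoArrow : (Fin 2 → ℝ) ≃ᵐ ℝ × ℝ) ∘
      (MeasurableEquiv.toLp 2 (Fin 2 → ℝ)).symm) with hf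
  have mp : MeasurePreserving f volume volume :=
    (volume_preserving_finTwoArrow ℝ).comp
      (EuclideanSpace.volume_preserving_symm_measurableEquiv_toLp (Fin 2))
  have hfapp : ∀ x : EuclideanSpace ℝ (Fin 2), f x = (x 0, x 1) := by
    intro x
    simp only [hf, Function.comp_apply, MeasurableEquiv.coe_toLp_symm,
      MeasurableEquiv.finTwoArrow_apply]
  set D : Set (ℝ × ℝ) := {p | (p.1 - m0) ^ 2 + (p.2 - m1) ^ 2 ≤ r ^ 2} with hD
  set T₀ : Set (ℝ × ℝ) := {p | ((p.1 - m0) ^ 2 + (p.2 - m1) ^ 2 ≤ r ^ 2) ∧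
        (0 ≤ p.1 ∧ p.1 ≤ 1) ∧ (0 ≤ p.2 ∧ p.2 ≤ 1)} with hT₀
  have mcont : Measurable (fun p : ℝ × ℝ => (p.1 - m0) ^ 2 + (p.2 - m1) ^ 2) := by
    fun_prop
  have mD : MeasurableSet D := measurableSet_le mcont measurable_const
  have mT₀ : MeasurableSet T₀ := by
    rw [hT₀]; simp only [Set.setOf_and]
    exact (measurableSet_le mcont measurable_const).inter
      (((measurableSet_le measurable_const measurable_fst).inter
        (measurableSet_le measurable_fst measurable_const)).inter
       ((measurableSet_le measurable_const measurable_snd).inter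
        (measurableSet_le measurable_snd measurable_const)))
  have hdistmem : ∀ x : EuclideanSpace ℝ (Fin 2),
      dist x (midpoint ℝ a b) ≤ r ↔ (x 0 - m0) ^ 2 + (x 1 - m1) ^ 2 ≤ r ^ 2 := by
    intro x
    rw [EuclideanSpace.dist_eq, Real.sqrt_le_left hr]
    simp only [Fin.sum_univ_two, Real.dist_eq, sq_abs, hmid 0, hmid 1, hm0def, hm1def]
  -- identify the ball with D
  have hball : Metric.closedBall (midpoint ℝ a b) r = f ⁻¹' D := by
    ext x
    rw [Metric.mem_closedBall, Set.mem_preimage, hfapp x, hdistmem x]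
    simp [hD]
  -- identify the ball ∩ square with T₀
  have hint : Metric.closedBall (midpoint ℝ a b) r ∩
      {x : EuclideanSpace ℝ (Fin 2) | ∀ i, x i ∈ Set.Icc (0 : ℝ) 1} = f ⁻¹' T₀ := by
    ext x
    rw [Set.mem_inter_iff, Metric.mem_closedBall, Set.mem_preimage, hfapp x, hdistmem x]
    simp only [hT₀, Set.mem_setOf_eq, Fin.forall_fin_two, Set.mem_Icc]
    try tauto
  -- antipodality constraints
  have h1 : c0 ^ 2 ≤ m0 ^ 2 := by
    rw [hc0def, hm0def]; nlinarith [mul_nonneg ha0 hb0]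
  have h2 : c0 ^ 2 ≤ (1 - m0) ^ 2 := by
    rw [hc0def, hm0def]
    nlinarith [mul_nonneg (by linarith : (0:ℝ) ≤ 1 - a 0) (by linarith : (0:ℝ) ≤ 1 - b 0)]
  have h3 : c1 ^ 2 ≤ m1 ^ 2 := by
    rw [hc1def, hm1def]; nlinarith [mul_nonneg ha0' hb0']
  have h4 : c1 ^ 2 ≤ (1 - m1) ^ 2 := by
    rw [hc1def, hm1def]
    nlinarith [mul_nonneg (by linarith : (0:ℝ) ≤ 1 - a 1) (by linarith : (0:ℝ) ≤ 1 - b 1)]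
  have hm0 : 0 ≤ m0 := by rw [hm0def]; linarith
  have hm0' : m0 ≤ 1 := by rw [hm0def]; linarith
  have hm1 : 0 ≤ m1 := by rw [hm1def]; linarith
  have hm1' : m1 ≤ 1 := by rw [hm1def]; linarith
  have key := half_disk_aux m0 m1 c0 c1 r hr2 hrhalf h1 h2 h3 h4 hm0 hm0' hm1 hm1'
  -- volume of the ball
  have hvolball : volume (Metric.closedBall (midpoint ℝ a b) r) =
      ENNReal.ofReal (Real.pi * r ^ 2) := by
    rw [EuclideanSpace.volume_closedBall]
    simp only [Fintype.card_fin]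
    rw [show ((2 : ℕ) : ℝ) / 2 + 1 = 2 by norm_num, Real.Gamma_two, div_one,
      Real.sq_sqrt Real.pi_nonneg]
    rw [← ENNReal.ofReal_pow hr, ← ENNReal.ofReal_mul (by positivity)]
    ring_nf
  have hvol1 : volume (Metric.closedBall (midpoint ℝ a b) r) = volume D := by
    rw [hball, mp.measure_preimage mD.nullMeasurableSet]
  have hvol2 : volume (Metric.closedBall (midpoint ℝ a b) r ∩
      {x : EuclideanSpace ℝ (Fin 2) | ∀ i, x i ∈ Set.Icc (0 : ℝ) 1}) = volume T₀ := by
    rw [hint, mp.measure_preimage mT₀.nullMeasurableSet]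
  rw [hvol2]
  have hmain : ENNReal.ofReal (Real.pi * r ^ 2) ≤ 2 * volume T₀ := by
    rw [← hvolball, hvol1]; exact key
  have h2' : (2 : ENNReal) * ENNReal.ofReal (Real.pi / 2 * r ^ 2) =
      ENNReal.ofReal (Real.pi * r ^ 2) := by
    rw [← ENNReal.ofReal_ofNat 2, ← ENNReal.ofReal_mul (by norm_num)]
    congr 1
    ring
  have hfin := h2' ▸ hmain
  exact (ENNReal.mul_le_mul_iff_right (by norm_num) (by norm_num)).mp hfin
end

section
/- The quantity (1/\sqrt{\pi}) \cdot (2 \int_0^1 t^{1/2} e^{-t} dt - \int_0^1 t^{3/2} e^{-t} dt) lies between 0.31445 and 0.31446; in particular it is at least 0.31445, and hence twice this quantity is at least 0.6289. -/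
open intervalIntegral Finset Real

lemma contRpow (s : ℝ) (hs : 0 ≤ s) : Continuous fun t : ℝ => t ^ s :=
  Real.continuous_rpow_const hs

lemma Jint (s : ℝ) (hs : 0 < s) : ∫ t in (0:ℝ)..1, t ^ s = 1 / (s + 1) := by
  rw [integral_rpow (Or.inl (by linarith))]
  rw [Real.one_rpow, Real.zero_rpow (by positivity)]
  ring

lemma termInt (s : ℝ) (hs : 0 < s) (i : ℕ) :
    ∫ t in (0:ℝ)..1, t ^ s * ((-t) ^ i / i.factorial)
      = (-1) ^ i / (i.factorial * (s + i + 1)) := by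
  have hcong : Set.EqOn (fun t : ℝ => t ^ s * ((-t) ^ i / i.factorial))
      (fun t : ℝ => ((-1) ^ i / i.factorial) * t ^ (s + i)) (Set.uIcc (0:ℝ) 1) := by
    intro t ht
    have ht0 : 0 ≤ t := by
      rw [Set.uIcc_of_le (by norm_num)] at ht; exact ht.1
    show t ^ s * ((-t) ^ i / i.factorial) = ((-1) ^ i / i.factorial) * t ^ (s + i)
    rw [Real.rpow_add' ht0 (by positivity), Real.rpow_natCast, neg_pow]
    ring
  rw [intervalIntegral.integral_congr hcong, intervalIntegral.integral_const_mul,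
    Jint (s + i) (by positivity)]
  have h1 : (s + (i:ℝ) + 1) ≠ 0 := by positivity
  field_simp

lemma mainBound (s : ℝ) (hs : 0 < s) :
    |(∫ t in (0:ℝ)..1, t ^ s * Real.exp (-t))
        - ∑ i ∈ range 10, (-1) ^ i / (i.factorial * (s + i + 1))|
      ≤ 11 / 36288000 / (s + 11) := by
  have hcontP : Continuous fun t : ℝ =>
      t ^ s * ∑ i ∈ range 10, (-t) ^ i / i.factorial := by
    apply (contRpow s hs.le).mul
    exact continuous_finset_sum _ fun i _ => (((continuous_neg).pow i).div_const _)
  have hcontf : Continuous fun t : ℝ => t ^ s * Real.exp (-t) :=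
    (contRpow s hs.le).mul (Real.continuous_exp.comp continuous_neg)
  have hsum : (∫ t in (0:ℝ)..1, t ^ s * ∑ i ∈ range 10, (-t) ^ i / i.factorial)
      = ∑ i ∈ range 10, (-1) ^ i / (i.factorial * (s + i + 1)) := by
    have : (fun t : ℝ => t ^ s * ∑ i ∈ range 10, (-t) ^ i / i.factorial)
        = fun t : ℝ => ∑ i ∈ range 10, t ^ s * ((-t) ^ i / i.factorial) := by
      funext t; rw [Finset.mul_sum]
    rw [this, intervalIntegral.integral_finset_sum]
    · exact Finset.sum_congr rfl fun i _ => termInt s hs i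
    · intro i _
      exact (((contRpow s hs.le).mul (((continuous_neg).pow i).div_const _))).intervalIntegrable _ _
  have herrInt : (∫ t in (0:ℝ)..1, (11 / 36288000 : ℝ) * t ^ (s + 10))
      = 11 / 36288000 / (s + 11) := by
    rw [intervalIntegral.integral_const_mul, Jint (s + 10) (by positivity)]
    have : s + (10:ℕ) + 1 = s + 11 := by push_cast; ring
    rw [show s + 10 + 1 = s + 11 by ring]
    ring
  rw [← hsum, ← intervalIntegral.integral_sub (hcontf.intervalIntegrable _ _)
    (hcontP.intervalIntegrable _ _)]
  calc |∫ t in (0:ℝ)..1, (t ^ s * Real.exp (-t)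
          - t ^ s * ∑ i ∈ range 10, (-t) ^ i / i.factorial)|
      ≤ ∫ t in (0:ℝ)..1, |t ^ s * Real.exp (-t)
          - t ^ s * ∑ i ∈ range 10, (-t) ^ i / i.factorial| :=
        intervalIntegral.abs_integral_le_integral_abs (by norm_num)
    _ ≤ ∫ t in (0:ℝ)..1, (11 / 36288000 : ℝ) * t ^ (s + 10) := by
        apply intervalIntegral.integral_mono_on (by norm_num)
        · exact ((hcontf.sub hcontP).abs).intervalIntegrable _ _
        · exact (((continuous_const.mul (contRpow (s+10) (by positivity))))).intervalIntegrable _ _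
        · intro t ht
          have ht0 : 0 ≤ t := ht.1
          have ht1 : t ≤ 1 := ht.2
          have hexp := Real.exp_bound (x := -t) (by rw [abs_neg, abs_of_nonneg ht0]; exact ht1)
            (n := 10) (by norm_num)
          rw [abs_neg, abs_of_nonneg ht0] at hexp
          have hb : |Real.exp (-t) - ∑ i ∈ range 10, (-t) ^ i / i.factorial|
              ≤ 11 / 36288000 * t ^ (10:ℕ) := by
            refine hexp.trans ?_
            have : ((Nat.succ 10 : ℕ) : ℝ) / ((Nat.factorial 10 : ℕ) * (10:ℕ))
                = 11 / 36288000 := by norm_num [Nat.factorial]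
            rw [this]
            nlinarith [pow_nonneg ht0 10]
          have hts : 0 ≤ t ^ s := Real.rpow_nonneg ht0 s
          calc |t ^ s * Real.exp (-t) - t ^ s * ∑ i ∈ range 10, (-t) ^ i / i.factorial|
              = t ^ s * |Real.exp (-t) - ∑ i ∈ range 10, (-t) ^ i / i.factorial| := by
                rw [← mul_sub, abs_mul, abs_of_nonneg hts]
            _ ≤ t ^ s * (11 / 36288000 * t ^ (10:ℕ)) := by
                exact mul_le_mul_of_nonneg_left hb hts
            _ = 11 / 36288000 * t ^ (s + 10) := by
                rw [Real.rpow_add' ht0 (by positivity)]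
                rw [show ((10:ℝ)) = ((10:ℕ):ℝ) by norm_num, Real.rpow_natCast]
                ring
    _ = 11 / 36288000 / (s + 11) := herrInt

/-- The quantity `(1/√π)(2∫_0^1 t^{1/2} e^{-t} dt - ∫_0^1 t^{3/2} e^{-t} dt)` lies between
`0.31445` and `0.31446`; in particular it is at least `0.31445` and twice it is at least
`0.6289`. -/
theorem stmt5 :
    0.31445 ≤ (1 / Real.sqrt Real.pi) *
        (2 * (∫ t in (0 : ℝ)..1, t ^ ((1 : ℝ) / 2) * Real.exp (-t)) -
          ∫ t in (0 : ℝ)..1, t ^ ((3 : ℝ) / 2) * Real.exp (-t)) ∧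
    (1 / Real.sqrt Real.pi) *
        (2 * (∫ t in (0 : ℝ)..1, t ^ ((1 : ℝ) / 2) * Real.exp (-t)) -
          ∫ t in (0 : ℝ)..1, t ^ ((3 : ℝ) / 2) * Real.exp (-t)) ≤ 0.31446 ∧
    0.6289 ≤ 2 * ((1 / Real.sqrt Real.pi) *
        (2 * (∫ t in (0 : ℝ)..1, t ^ ((1 : ℝ) / 2) * Real.exp (-t)) -
          ∫ t in (0 : ℝ)..1, t ^ ((3 : ℝ) / 2) * Real.exp (-t))) := by
  have h1 := mainBound (1/2) (by norm_num)
  have h2 := mainBound (3/2) (by norm_num)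
  rw [abs_le] at h1 h2
  simp only [Finset.sum_range_succ, Finset.sum_range_zero, Nat.factorial] at h1 h2
  norm_num at h1 h2
  obtain ⟨h1l, h1r⟩ := h1
  obtain ⟨h2l, h2r⟩ := h2
  set I1 := ∫ t in (0 : ℝ)..1, t ^ ((1 : ℝ) / 2) * Real.exp (-t) with hI1
  set I2 := ∫ t in (0 : ℝ)..1, t ^ ((3 : ℝ) / 2) * Real.exp (-t) with hI2
  have hq1 : (1.7724536 : ℝ) ≤ Real.sqrt Real.pi := by
    rw [show (1.7724536:ℝ) = Real.sqrt (1.7724536^2) from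
      (Real.sqrt_sq (by norm_num)).symm]
    exact Real.sqrt_le_sqrt (by nlinarith [Real.pi_gt_d6])
  have hq2 : Real.sqrt Real.pi ≤ (1.772454 : ℝ) := by
    rw [show (1.772454:ℝ) = Real.sqrt (1.772454^2) from
      (Real.sqrt_sq (by norm_num)).symm]
    exact Real.sqrt_le_sqrt (by nlinarith [Real.pi_lt_d6])
  have hq0 : (0:ℝ) < Real.sqrt Real.pi := by linarith
  have key1 : 0.31445 ≤ (1 / Real.sqrt Real.pi) * (2 * I1 - I2) := by
    rw [one_div, inv_mul_eq_div, le_div_iff₀ hq0]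
    nlinarith
  have key2 : (1 / Real.sqrt Real.pi) * (2 * I1 - I2) ≤ 0.31446 := by
    rw [one_div, inv_mul_eq_div, div_le_iff₀ hq0]
    nlinarith
  exact ⟨key1, key2, by linarith⟩
end
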